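/- Let A ∈ (ℝ ∪ {-∞})^{n×m} and b ∈ ℝ^n. The system A ⊗ x = b is solvable if and only if the union over columns i = 1, …, m of the sets T(b, A_{·i}) equals {1, …, n}, where T(y,z) = argmin { y_k − z_k : k with y_k and z_k both finite }. -/

import Mathlib

open Finset

/-- Max-plus matrix-vector product over `WithBot ℝ`. -/
def mpMul {n m : ℕ} (A : Fin n → Fin m → WithBot ℝ) (x : Fin m → WithBot ℝ) :
    Fin n → WithBot ℝ :=
  fun i => univ.sup fun j => A i j + x j

/-- Membership `k ∈ T(b, z)` for finite `b`: `z k` is finite and `k` minimizes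
`b_k - z_k` over indices where `z` is finite. -/
def memT {n : ℕ} (b : Fin n → ℝ) (z : Fin n → WithBot ℝ) (k : Fin n) : Prop :=
  ∃ r : ℝ, z k = (r : WithBot ℝ) ∧
    ∀ l : Fin n, ∀ s : ℝ, z l = (s : WithBot ℝ) → b k - r ≤ b l - s

/-- The one-sided max-plus system `A ⊗ x = b` (with `b` finite) is solvable iff
the sets `T(b, A_{·i})`, `i = 1, …, m`, cover `{1, …, n}`. -/
theorem onesided_solvable_iff_cover {n m : ℕ}
    (A : Fin n → Fin m → WithBot ℝ) (b : Fin n → ℝ) :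
    (∃ x : Fin m → WithBot ℝ, mpMul A x = fun k => (b k : WithBot ℝ)) ↔
    ∀ k : Fin n, ∃ i : Fin m, memT b (fun l => A l i) k := by
  constructor
  · rintro ⟨x, hx⟩ k
    have hk : univ.sup (fun j => A k j + x j) = (b k : WithBot ℝ) := congrFun hx k
    have hne : (univ : Finset (Fin m)).Nonempty := by
      by_contra h
      rw [not_nonempty_iff_eq_empty] at h
      rw [h, Finset.sup_empty] at hk
      exact WithBot.bot_ne_coe hk
    obtain ⟨j, -, hj⟩ := Finset.exists_mem_eq_sup univ hne (fun j => A k j + x j)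
    rw [hk] at hj
    obtain ⟨r, t, hr, ht, hrt⟩ := WithBot.add_eq_coe.mp hj.symm
    refine ⟨j, r, hr.symm, ?_⟩
    intro l s hs
    have hs' : A l j = (s : WithBot ℝ) := hs
    have hle : A l j + x j ≤ (b l : WithBot ℝ) := by
      rw [← congrFun hx l]
      exact Finset.le_sup (f := fun j' => A l j' + x j') (mem_univ j)
    rw [hs', ← ht, ← WithBot.coe_add, WithBot.coe_le_coe] at hle
    linarith
  · intro hcov
    set c : Fin m → WithBot ℝ :=
      fun i => univ.sup fun l => A l i + ((-(b l) : ℝ) : WithBot ℝ) with hc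
    refine ⟨fun i => ((-WithBot.unbotD 0 (c i) : ℝ) : WithBot ℝ), ?_⟩
    funext k
    show univ.sup (fun j => A k j + ((-WithBot.unbotD 0 (c j) : ℝ) : WithBot ℝ)) = (b k : WithBot ℝ)
    obtain ⟨i, r, hr0, hmin⟩ := hcov k
    have hr : A k i = (r : WithBot ℝ) := hr0
    apply le_antisymm
    · apply Finset.sup_le
      intro j _
      rcases hAj : A k j with _ | s
      · show (⊥ : WithBot ℝ) + _ ≤ _
        rw [WithBot.bot_add]; exact bot_le
      · have hs : A k j = (s : WithBot ℝ) := hAj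
        have h1 : ((s - b k : ℝ) : WithBot ℝ) ≤ c j := by
          have h2 : A k j + ((-(b k) : ℝ) : WithBot ℝ) ≤ c j :=
            Finset.le_sup (f := fun l => A l j + ((-(b l) : ℝ) : WithBot ℝ)) (mem_univ k)
          rw [hs, ← WithBot.coe_add] at h2
          convert h2 using 2; ring
        have hcb : c j ≠ ⊥ := fun h => by simp [h] at h1
        obtain ⟨e, he⟩ := WithBot.ne_bot_iff_exists.mp hcb
        rw [← he, WithBot.coe_le_coe] at h1
        rw [← he, WithBot.unbotD_coe]
        show (s : WithBot ℝ) + ((-e : ℝ) : WithBot ℝ) ≤ _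
        rw [← WithBot.coe_add, WithBot.coe_le_coe]
        linarith
    · have hci : c i = ((r - b k : ℝ) : WithBot ℝ) := by
        apply le_antisymm
        · apply Finset.sup_le
          intro l _
          rcases hAl : A l i with _ | s
          · show (⊥ : WithBot ℝ) + _ ≤ _
            rw [WithBot.bot_add]; exact bot_le
          · have hs : A l i = (s : WithBot ℝ) := hAl
            have := hmin l s hs
            show (s : WithBot ℝ) + ((-(b l) : ℝ) : WithBot ℝ) ≤ _
            rw [← WithBot.coe_add, WithBot.coe_le_coe]
            linarith
        · have h2 : A k i + ((-(b k) : ℝ) : WithBot ℝ) ≤ c i :=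
            Finset.le_sup (f := fun l => A l i + ((-(b l) : ℝ) : WithBot ℝ)) (mem_univ k)
          rw [hr, ← WithBot.coe_add] at h2
          convert h2 using 2; ring
      have hterm : A k i + ((-WithBot.unbotD 0 (c i) : ℝ) : WithBot ℝ) = (b k : WithBot ℝ) := by
        rw [hr, hci, WithBot.unbotD_coe, ← WithBot.coe_add]
        norm_num
      calc (b k : WithBot ℝ) = A k i + ((-WithBot.unbotD 0 (c i) : ℝ) : WithBot ℝ) := hterm.symm
        _ ≤ _ := Finset.le_sup (f := fun j => A k j + ((-(WithBot.unbotD 0 (c j)) : ℝ) : WithBot ℝ)) (mem_univ i)
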